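/- arXiv:1710.05689 — 2 statements merged into one kernel-verified Lean document; each statement's English description precedes it below -/
import Mathlib

section
/- Let V be a vector space with basis v_1,...,v_N over a field K containing an element q with q not a root of unity, and define the linear map R on V⊗V by R(v_i⊗v_j) = q^{δ_{ij}} v_j⊗v_i + θ(j-i)(q−q^{-1}) v_i⊗v_j, where θ(n)=1 if n>0 and 0 otherwise. Then R satisfies the braid equation: (R⊗id)(id⊗R)(R⊗id) = (id⊗R)(R⊗id)(id⊗R) on V⊗V⊗V. -/
open TensorProduct

noncomputable section

variable (K : Type) [Field K]

/-- The operator `f ⊗ id` on the first two factors of `M ⊗ (M ⊗ M)`. -/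
def op1 {M : Type} [AddCommGroup M] [Module K M]
    (f : M ⊗[K] M →ₗ[K] M ⊗[K] M) : M ⊗[K] (M ⊗[K] M) →ₗ[K] M ⊗[K] (M ⊗[K] M) :=
  (TensorProduct.assoc K M M M).toLinearMap ∘ₗ (LinearMap.rTensor M f) ∘ₗ
    (TensorProduct.assoc K M M M).symm.toLinearMap

/-- The operator `id ⊗ f` on the last two factors of `M ⊗ (M ⊗ M)`. -/
def op2 {M : Type} [AddCommGroup M] [Module K M]
    (f : M ⊗[K] M →ₗ[K] M ⊗[K] M) : M ⊗[K] (M ⊗[K] M) →ₗ[K] M ⊗[K] (M ⊗[K] M) :=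
  LinearMap.lTensor M f

variable (N : ℕ) (q : K)

/-- Standard basis of `V = K^N`. -/
def vb : Module.Basis (Fin N) K (Fin N → K) := Pi.basisFun K (Fin N)

/-- `R(v_i ⊗ v_j) = q^{δ_{ij}} v_j ⊗ v_i + θ(j-i)(q - q⁻¹) v_i ⊗ v_j`. -/
def Rmap : (Fin N → K) ⊗[K] (Fin N → K) →ₗ[K] (Fin N → K) ⊗[K] (Fin N → K) :=
  ((vb K N).tensorProduct (vb K N)).constr K fun p =>
    (if p.1 = p.2 then q else 1) • (vb K N p.2 ⊗ₜ[K] vb K N p.1) +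
    (if (p.1 : ℕ) < (p.2 : ℕ) then q - q⁻¹ else 0) • (vb K N p.1 ⊗ₜ[K] vb K N p.2)

lemma Rmap_apply (i j : Fin N) : Rmap K N q (vb K N i ⊗ₜ[K] vb K N j) =
    (if i = j then q else 1) • (vb K N j ⊗ₜ[K] vb K N i) +
    (if (i : ℕ) < (j : ℕ) then q - q⁻¹ else 0) • (vb K N i ⊗ₜ[K] vb K N j) := by
  have : (vb K N i ⊗ₜ[K] vb K N j) = ((vb K N).tensorProduct (vb K N)) (i, j) := by
    simp [Module.Basis.tensorProduct_apply]
  rw [this, Rmap, Module.Basis.constr_basis]; simp [Module.Basis.tensorProduct_apply]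

lemma op1_tmul {M : Type} [AddCommGroup M] [Module K M]
    (f : M ⊗[K] M →ₗ[K] M ⊗[K] M) (a b c : M) :
    op1 K f (a ⊗ₜ[K] (b ⊗ₜ[K] c)) = (TensorProduct.assoc K M M M) (f (a ⊗ₜ[K] b) ⊗ₜ[K] c) := by
  simp [op1]

lemma op2_tmul {M : Type} [AddCommGroup M] [Module K M]
    (f : M ⊗[K] M →ₗ[K] M ⊗[K] M) (a : M) (x : M ⊗[K] M) :
    op2 K f (a ⊗ₜ[K] x) = a ⊗ₜ[K] f x := by
  simp [op2]

lemma op1_basis (i j k : Fin N) :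
    op1 K (Rmap K N q) (vb K N i ⊗ₜ[K] (vb K N j ⊗ₜ[K] vb K N k)) =
    (if i = j then q else 1) • (vb K N j ⊗ₜ[K] (vb K N i ⊗ₜ[K] vb K N k)) +
    (if (i : ℕ) < (j : ℕ) then q - q⁻¹ else 0) •
      (vb K N i ⊗ₜ[K] (vb K N j ⊗ₜ[K] vb K N k)) := by
  rw [op1_tmul, Rmap_apply]
  simp only [add_tmul, smul_tmul', LinearEquiv.map_add, LinearEquiv.map_smul, assoc_tmul]

lemma op2_basis (i j k : Fin N) :
    op2 K (Rmap K N q) (vb K N i ⊗ₜ[K] (vb K N j ⊗ₜ[K] vb K N k)) =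
    (if j = k then q else 1) • (vb K N i ⊗ₜ[K] (vb K N k ⊗ₜ[K] vb K N j)) +
    (if (j : ℕ) < (k : ℕ) then q - q⁻¹ else 0) •
      (vb K N i ⊗ₜ[K] (vb K N j ⊗ₜ[K] vb K N k)) := by
  rw [op2_tmul, Rmap_apply]
  simp only [tmul_add, tmul_smul]

set_option maxHeartbeats 4000000 in
set_option synthInstance.maxHeartbeats 400000 in
/-- The map `R` satisfies the braid equation. -/
theorem Rmap_braid (hq : ∀ n : ℕ, 0 < n → q ^ n ≠ 1) :
    op1 K (Rmap K N q) ∘ₗ op2 K (Rmap K N q) ∘ₗ op1 K (Rmap K N q) =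
      op2 K (Rmap K N q) ∘ₗ op1 K (Rmap K N q) ∘ₗ op2 K (Rmap K N q) := by
  apply Module.Basis.ext ((vb K N).tensorProduct ((vb K N).tensorProduct (vb K N)))
  rintro ⟨i, j, k⟩
  simp only [Module.Basis.tensorProduct_apply, LinearMap.comp_apply, op1_basis, op2_basis,
    map_add, map_smul, smul_add, smul_smul]
  rcases eq_or_ne i j with h1 | h1 <;> rcases eq_or_ne j k with h2 | h2 <;>
    rcases eq_or_ne i k with h3 | h3 <;>
    (try simp only [h1]) <;> (try simp only [h2]) <;> (try simp only [h3]) <;>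
    simp only [Fin.ext_iff, ne_eq] at h1 h2 h3 ⊢ <;>
    split_ifs <;> first
    | (exfalso; omega)
    | (exfalso; tauto)
    | (rcases eq_or_ne q 0 with h0 | h0
       · subst h0; match_scalars <;> simp
       · match_scalars <;> field_simp <;> ring)

end
end

section
/- Let V = ⊕_{i∈I} V_i and let T : V⊗V → V⊗V be a linear map with components T_{ij} : V_i⊗V_j → V_j⊗V_i satisfying the braid equation. For any scalars λ_{ij} ∈ K, the rescaled map T′ = Σ_{i,j} λ_{ij} T_{ij} also satisfies the braid equation T′_1 T′_2 T′_1 = T′_2 T′_1 T′_2. -/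
open TensorProduct LinearMap DirectSum

noncomputable section

variable (K : Type) [Field K]

variable {I : Type} [Fintype I] [DecidableEq I] (V : I → Type)
  [∀ i, AddCommGroup (V i)] [∀ i, Module K (V i)]

set_option maxHeartbeats 1000000 in
/-- If `T` with components `T_{ij}` satisfies the braid equation, then the rescaled map
`T' = Σ λ_{ij} T_{ij}` also satisfies the braid equation. -/
theorem braid_of_rescale
    (T T' : (⨁ i : I, V i) ⊗[K] (⨁ i : I, V i) →ₗ[K] (⨁ i : I, V i) ⊗[K] (⨁ i : I, V i))
    (Tc : ∀ i j : I, V i ⊗[K] V j →ₗ[K] V j ⊗[K] V i)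
    (lam : I → I → K)
    (hT : ∀ (i j : I) (x : V i) (y : V j),
      T (DirectSum.lof K I V i x ⊗ₜ[K] DirectSum.lof K I V j y) =
        TensorProduct.map (DirectSum.lof K I V j) (DirectSum.lof K I V i) (Tc i j (x ⊗ₜ[K] y)))
    (hT' : ∀ (i j : I) (x : V i) (y : V j),
      T' (DirectSum.lof K I V i x ⊗ₜ[K] DirectSum.lof K I V j y) =
        lam i j • TensorProduct.map (DirectSum.lof K I V j) (DirectSum.lof K I V i)
          (Tc i j (x ⊗ₜ[K] y)))
    (hbraid : op1 K T ∘ₗ op2 K T ∘ₗ op1 K T = op2 K T ∘ₗ op1 K T ∘ₗ op2 K T) :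
    op1 K T' ∘ₗ op2 K T' ∘ₗ op1 K T' = op2 K T' ∘ₗ op1 K T' ∘ₗ op2 K T' := by
  set M := ⨁ i : I, V i with hM
  -- sets generating the relevant submodules
  set S1 : I → I → Set (M ⊗[K] (M ⊗[K] M)) := fun p q =>
    {v | ∃ (x : V p) (y : V q) (c : M),
      v = DirectSum.lof K I V p x ⊗ₜ[K] (DirectSum.lof K I V q y ⊗ₜ[K] c)} with hS1
  set S2 : I → I → Set (M ⊗[K] (M ⊗[K] M)) := fun q r =>
    {v | ∃ (a : M) (y : V q) (z : V r),
      v = a ⊗ₜ[K] (DirectSum.lof K I V q y ⊗ₜ[K] DirectSum.lof K I V r z)} with hS2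
  have scale1 : ∀ (p q : I) {u : M ⊗[K] (M ⊗[K] M)}, u ∈ Submodule.span K (S1 p q) →
      op1 K T' u = lam p q • op1 K T u := by
    intro p q u hu
    refine LinearMap.eqOn_span (f := op1 K T') (g := lam p q • op1 K T) ?_ hu
    rintro v ⟨x, y, c, rfl⟩
    simp only [op1, LinearMap.coe_comp, LinearEquiv.coe_coe, Function.comp_apply,
      TensorProduct.assoc_symm_tmul, rTensor_tmul, LinearMap.smul_apply,
      hT' p q x y, hT p q x y]
    rw [← smul_tmul', LinearEquiv.map_smul]
  have scale2 : ∀ (q r : I) {u : M ⊗[K] (M ⊗[K] M)}, u ∈ Submodule.span K (S2 q r) →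
      op2 K T' u = lam q r • op2 K T u := by
    intro q r u hu
    refine LinearMap.eqOn_span (f := op2 K T') (g := lam q r • op2 K T) ?_ hu
    rintro v ⟨a, y, z, rfl⟩
    simp [op2, hT' q r y z, hT q r y z, tmul_smul]
  ext i x j y k z
  simp only [TensorProduct.AlgebraTensorModule.curry_apply, TensorProduct.curry_apply,
    LinearMap.coe_comp, Function.comp_apply, LinearMap.coe_restrictScalars]
  set a := DirectSum.lof K I V i x
  set b := DirectSum.lof K I V j y
  set c := DirectSum.lof K I V k z
  set u0 : M ⊗[K] (M ⊗[K] M) := a ⊗ₜ[K] (b ⊗ₜ[K] c) with hu0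
  -- basic membership facts
  have m1 : u0 ∈ Submodule.span K (S1 i j) := Submodule.subset_span ⟨x, y, c, rfl⟩
  have m2 : u0 ∈ Submodule.span K (S2 j k) := Submodule.subset_span ⟨a, y, z, rfl⟩
  -- descriptions of op1 T u0 and op2 T u0
  have eqA : op1 K T u0 = (TensorProduct.assoc K M M M)
      ((TensorProduct.map (DirectSum.lof K I V j) (DirectSum.lof K I V i)
        (Tc i j (x ⊗ₜ[K] y))) ⊗ₜ[K] c) := by
    simp [op1, u0, a, b, M, hT i j x y]
  have eqC : op2 K T u0 = a ⊗ₜ[K] (TensorProduct.map (DirectSum.lof K I V k)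
      (DirectSum.lof K I V j) (Tc j k (y ⊗ₜ[K] z))) := by
    simp [op2, u0, b, c, hT j k y z]
  -- membership lemmas
  have memA : ∀ w : V j ⊗[K] V i, (TensorProduct.assoc K M M M)
      ((TensorProduct.map (DirectSum.lof K I V j) (DirectSum.lof K I V i) w) ⊗ₜ[K] c) ∈
      Submodule.span K (S2 i k) := by
    intro w
    induction w using TensorProduct.induction_on with
    | zero =>
      rw [map_zero, TensorProduct.zero_tmul, LinearEquiv.map_zero]
      exact zero_mem _
    | tmul y' x' =>
      exact Submodule.subset_span ⟨DirectSum.lof K I V j y', x', z, by simp [c]⟩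
    | add v w hv hw =>
      rw [map_add, TensorProduct.add_tmul, map_add]
      exact add_mem hv hw
  have innerB : ∀ (y' : V j) (w2 : V k ⊗[K] V i),
      (DirectSum.lof K I V j y') ⊗ₜ[K]
        (TensorProduct.map (DirectSum.lof K I V k) (DirectSum.lof K I V i) w2) ∈
      Submodule.span K (S1 j k) := by
    intro y' w2
    induction w2 using TensorProduct.induction_on with
    | zero => simp
    | tmul z'' x'' =>
      exact Submodule.subset_span ⟨y', z'', DirectSum.lof K I V i x'', by simp⟩
    | add v w hv hw =>
      rw [map_add, TensorProduct.tmul_add]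
      exact add_mem hv hw
  have memB : ∀ w : V j ⊗[K] V i, op2 K T ((TensorProduct.assoc K M M M)
      ((TensorProduct.map (DirectSum.lof K I V j) (DirectSum.lof K I V i) w) ⊗ₜ[K] c)) ∈
      Submodule.span K (S1 j k) := by
    intro w
    induction w using TensorProduct.induction_on with
    | zero => simp
    | tmul y' x' =>
      have : op2 K T ((TensorProduct.assoc K M M M)
          ((TensorProduct.map (DirectSum.lof K I V j) (DirectSum.lof K I V i) (y' ⊗ₜ[K] x')) ⊗ₜ[K] c)) =
          (DirectSum.lof K I V j y') ⊗ₜ[K]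
            (TensorProduct.map (DirectSum.lof K I V k) (DirectSum.lof K I V i)
              (Tc i k (x' ⊗ₜ[K] z))) := by
        simp [op2, c, hT i k x' z]
      rw [this]
      exact innerB y' _
    | add v w hv hw =>
      rw [map_add, TensorProduct.add_tmul, map_add, map_add]
      exact add_mem hv hw
  have memC : ∀ w : V k ⊗[K] V j, a ⊗ₜ[K]
      (TensorProduct.map (DirectSum.lof K I V k) (DirectSum.lof K I V j) w) ∈
      Submodule.span K (S1 i k) := by
    intro w
    induction w using TensorProduct.induction_on with
    | zero => simp
    | tmul z' y' =>
      exact Submodule.subset_span ⟨x, z', DirectSum.lof K I V j y', by simp [a]⟩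
    | add v w hv hw =>
      rw [map_add, TensorProduct.tmul_add]
      exact add_mem hv hw
  have innerD : ∀ (y' : V j) (w2 : V k ⊗[K] V i), (TensorProduct.assoc K M M M)
      ((TensorProduct.map (DirectSum.lof K I V k) (DirectSum.lof K I V i) w2) ⊗ₜ[K]
        (DirectSum.lof K I V j y')) ∈ Submodule.span K (S2 i j) := by
    intro y' w2
    induction w2 using TensorProduct.induction_on with
    | zero => simp
    | tmul z'' x'' =>
      exact Submodule.subset_span ⟨DirectSum.lof K I V k z'', x'', y', by simp⟩
    | add v w hv hw =>
      rw [map_add, TensorProduct.add_tmul, map_add]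
      exact add_mem hv hw
  have memD : ∀ w : V k ⊗[K] V j, op1 K T (a ⊗ₜ[K]
      (TensorProduct.map (DirectSum.lof K I V k) (DirectSum.lof K I V j) w)) ∈
      Submodule.span K (S2 i j) := by
    intro w
    induction w using TensorProduct.induction_on with
    | zero => simp
    | tmul z' y' =>
      have : op1 K T (a ⊗ₜ[K]
          (TensorProduct.map (DirectSum.lof K I V k) (DirectSum.lof K I V j) (z' ⊗ₜ[K] y'))) =
          (TensorProduct.assoc K M M M)
            ((TensorProduct.map (DirectSum.lof K I V k) (DirectSum.lof K I V i)
              (Tc i k (x ⊗ₜ[K] z'))) ⊗ₜ[K] (DirectSum.lof K I V j y')) := by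
        simp [op1, a, M, hT i k x z']
      rw [this]
      exact innerD y' _
    | add v w hv hw =>
      simp only [map_add, TensorProduct.tmul_add]
      exact add_mem hv hw
  -- the two chains
  have lhs : op1 K T' (op2 K T' (op1 K T' u0)) =
      (lam i j * (lam i k * lam j k)) • op1 K T (op2 K T (op1 K T u0)) := by
    rw [scale1 i j m1, map_smul, map_smul, scale2 i k (eqA ▸ memA _), map_smul,
      scale1 j k (eqA ▸ memB _), smul_smul, smul_smul, mul_assoc]
  have rhs : op2 K T' (op1 K T' (op2 K T' u0)) =
      (lam j k * (lam i k * lam i j)) • op2 K T (op1 K T (op2 K T u0)) := by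
    rw [scale2 j k m2, map_smul, map_smul, scale1 i k (eqC ▸ memC _), map_smul,
      scale2 i j (eqC ▸ memD _), smul_smul, smul_smul, mul_assoc]
  have hb := LinearMap.congr_fun hbraid u0
  simp only [LinearMap.coe_comp, Function.comp_apply] at hb
  show op1 K T' (op2 K T' (op1 K T' u0)) = op2 K T' (op1 K T' (op2 K T' u0))
  rw [lhs, rhs, hb]
  congr 1
  ring

end
end
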